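/- For any m ≥ 3 candidates at arbitrary distinct locations in a Euclidean space and any number n of voters, the Pair-Independent mechanism has distortion at most 1 + 6σ: for every action profile a and every location profile x consistent with a, E[SC(f(a), x)] ≤ (1 + 6σ)·OPT(x), where σ = d_max/d_min for the candidate set. -/

import Mathlib

open Finset

/-- Cost of a point `z` when the pair of candidates `(y k, y l)` is elected:
the distance to the closer of the two winners. -/
noncomputable def pairCost {α : Type*} [PseudoMetricSpace α] {m : ℕ}
    (y : Fin m → α) (k l : Fin m) (z : α) : ℝ :=
  min (dist z (y k)) (dist z (y l))

/-- Social cost of the pair `(y k, y l)` on the location profile `x`. -/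
noncomputable def socialCost {α : Type*} [PseudoMetricSpace α] {m n : ℕ}
    (y : Fin m → α) (k l : Fin m) (x : Fin n → α) : ℝ :=
  ∑ i, pairCost y k l (x i)

/-- Optimal social cost over all pairs of distinct candidates. -/
noncomputable def OPT {α : Type*} [PseudoMetricSpace α] {m n : ℕ}
    (y : Fin m → α) (x : Fin n → α) : ℝ :=
  sInf {c : ℝ | ∃ k l : Fin m, k ≠ l ∧ c = socialCost y k l x}

/-- A location profile `x` is consistent with an action profile `a` if every
voter votes for (one of) her nearest candidate(s). -/
def Consistent {α : Type*} [PseudoMetricSpace α] {m n : ℕ}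
    (y : Fin m → α) (a : Fin n → Fin m) (x : Fin n → α) : Prop :=
  ∀ (i : Fin n) (k : Fin m), dist (x i) (y (a i)) ≤ dist (x i) (y k)

/-- `f` is a randomized two-winner mechanism: on every action profile it gives a
probability distribution over unordered pairs of distinct candidates
(represented by a symmetric nonnegative function vanishing on the diagonal whose
values over the pairs `k < l` sum to one). -/
def IsRandMech {m n : ℕ} (f : (Fin n → Fin m) → Fin m → Fin m → ℝ) : Prop :=
  ∀ a : Fin n → Fin m, (∀ k l, 0 ≤ f a k l) ∧ (∀ k l, f a k l = f a l k) ∧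
    (∀ k, f a k k = 0) ∧
    ∑ p ∈ univ.filter (fun p : Fin m × Fin m => p.1 < p.2), f a p.1 p.2 = 1

/-- Expected cost of the point `z` under the lottery `f a`. -/
noncomputable def expCost {α : Type*} [PseudoMetricSpace α] {m n : ℕ}
    (y : Fin m → α) (f : (Fin n → Fin m) → Fin m → Fin m → ℝ)
    (a : Fin n → Fin m) (z : α) : ℝ :=
  ∑ p ∈ univ.filter (fun p : Fin m × Fin m => p.1 < p.2),
    f a p.1 p.2 * pairCost y p.1 p.2 z

/-- Expected social cost of the randomized mechanism `f` on action profile `a`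
and location profile `x`. -/
noncomputable def expSC {α : Type*} [PseudoMetricSpace α] {m n : ℕ}
    (y : Fin m → α) (f : (Fin n → Fin m) → Fin m → Fin m → ℝ)
    (a : Fin n → Fin m) (x : Fin n → α) : ℝ :=
  ∑ p ∈ univ.filter (fun p : Fin m × Fin m => p.1 < p.2),
    f a p.1 p.2 * socialCost y p.1 p.2 x

/-- Strategy-proofness of a randomized two-winner mechanism: voting for a
nearest candidate always minimizes a voter's expected cost, whatever the
other voters do. -/
def RandSP {α : Type*} [PseudoMetricSpace α] {m n : ℕ}
    (y : Fin m → α) (f : (Fin n → Fin m) → Fin m → Fin m → ℝ) : Prop :=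
  ∀ (i : Fin n) (xi : α) (a : Fin n → Fin m) (astar ai' : Fin m),
    (∀ k, dist xi (y astar) ≤ dist xi (y k)) →
    expCost y f (Function.update a i astar) xi ≤
      expCost y f (Function.update a i ai') xi

/-- Number of votes received by candidate `k` under action profile `a`. -/
def votes {m n : ℕ} (a : Fin n → Fin m) (k : Fin m) : ℕ :=
  (univ.filter fun i => a i = k).card

/-- Maximum distance between two distinct candidates. -/
noncomputable def dmaxC {α : Type*} [PseudoMetricSpace α] {m : ℕ} (y : Fin m → α) : ℝ :=
  sSup {c : ℝ | ∃ k l : Fin m, k ≠ l ∧ c = dist (y k) (y l)}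

/-- Minimum distance between two distinct candidates. -/
noncomputable def dminC {α : Type*} [PseudoMetricSpace α] {m : ℕ} (y : Fin m → α) : ℝ :=
  sInf {c : ℝ | ∃ k l : Fin m, k ≠ l ∧ c = dist (y k) (y l)}

/-- The Pair-Independent mechanism: if some candidate receives all `n` votes,
every pair containing that candidate is elected with probability `1/(m-1)`;
otherwise the pair `(k, l)` is elected with probability
`n_k/(n - n_l) + n_l/(n - n_k) - (n_k + n_l)/n`. -/
noncomputable def pairIndep (n m : ℕ) (a : Fin n → Fin m) (k l : Fin m) : ℝ :=
  if k = l then 0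
  else if votes a k = n ∨ votes a l = n then 1 / ((m : ℝ) - 1)
  else (votes a k : ℝ) / ((n : ℝ) - (votes a l : ℝ)) +
    (votes a l : ℝ) / ((n : ℝ) - (votes a k : ℝ)) -
    ((votes a k : ℝ) + (votes a l : ℝ)) / (n : ℝ)


section AuxLemmas

open Finset

lemma sum_offdiag {m : ℕ} (G : Fin m → Fin m → ℝ) :
    ∑ p ∈ univ.filter (fun p : Fin m × Fin m => p.1 ≠ p.2), G p.1 p.2
      = (∑ k, ∑ l, G k l) - ∑ k, G k k := by
  rw [Finset.sum_filter, Fintype.sum_prod_type]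
  have h1 : ∀ k : Fin m, (∑ l, if k ≠ l then G k l else 0)
      = (∑ l, G k l) - G k k := by
    intro k
    have h2 : (∑ l, if k = l then G k l else 0) = G k k := by
      simp [Finset.sum_ite_eq]
    have h3 : ∀ l : Fin m, (if k ≠ l then G k l else 0)
        = G k l - (if k = l then G k l else 0) := by
      intro l; by_cases h : k = l <;> simp [h]
    rw [Finset.sum_congr rfl (fun l _ => h3 l), Finset.sum_sub_distrib, h2]
  rw [Finset.sum_congr rfl (fun k _ => h1 k), Finset.sum_sub_distrib]

lemma sum_pairs {m : ℕ} (G : Fin m → Fin m → ℝ) :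
    ∑ p ∈ univ.filter (fun p : Fin m × Fin m => p.1 < p.2), (G p.1 p.2 + G p.2 p.1)
      = ∑ p ∈ univ.filter (fun p : Fin m × Fin m => p.1 ≠ p.2), G p.1 p.2 := by
  have hsplit : univ.filter (fun p : Fin m × Fin m => p.1 ≠ p.2)
      = univ.filter (fun p : Fin m × Fin m => p.1 < p.2)
        ∪ univ.filter (fun p : Fin m × Fin m => p.2 < p.1) := by
    ext p
    simp only [Finset.mem_filter, Finset.mem_union, Finset.mem_univ, true_and]
    constructor
    · intro h; exact (lt_or_gt_of_ne h).imp id id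
    · rintro (h | h); exact ne_of_lt h; exact (ne_of_lt h).symm
  have hdisj : Disjoint (univ.filter (fun p : Fin m × Fin m => p.1 < p.2))
      (univ.filter (fun p : Fin m × Fin m => p.2 < p.1)) := by
    rw [Finset.disjoint_left]
    intro p hp1 hp2
    simp only [Finset.mem_filter] at hp1 hp2
    exact absurd hp2.2 (not_lt_of_gt hp1.2)
  rw [hsplit, Finset.sum_union hdisj, Finset.sum_add_distrib]
  congr 1
  refine Finset.sum_nbij' (i := Prod.swap) (j := Prod.swap) ?_ ?_ ?_ ?_ ?_ <;>
    simp +contextual [Finset.mem_filter]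

lemma key_alg (n q r : ℝ) (hn : 0 < n) (hq : 0 ≤ q) (hr : 0 ≤ r)
    (hqn : q < n) (hrn : r < n) :
    n - (q^2 + r^2)/n - q*r^2/(n*(n-q)) - r*q^2/(n*(n-r)) ≤ 3*(n - q - r) := by
  have h1 : 0 < n - q := by linarith
  have h2 : 0 < n - r := by linarith
  have A : q*r - q*(n-q-r) ≤ q*r^2/(n-q) := by
    rw [le_div_iff₀ h1]
    nlinarith [mul_nonneg hq (sq_nonneg (n-q-r))]
  have B : q*r - r*(n-q-r) ≤ r*q^2/(n-r) := by
    rw [le_div_iff₀ h2]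
    nlinarith [mul_nonneg hr (sq_nonneg (n-q-r))]
  have e1 : q*r^2/(n*(n-q)) = (q*r^2/(n-q))/n := by rw [div_div]; ring_nf
  have e2 : r*q^2/(n*(n-r)) = (r*q^2/(n-r))/n := by rw [div_div]; ring_nf
  rw [e1, e2]
  have step1 : n - (q^2+r^2)/n - (q*r^2/(n-q))/n - (r*q^2/(n-r))/n
      ≤ n - (q^2+r^2)/n - (q*r - q*(n-q-r))/n - (q*r - r*(n-q-r))/n := by
    gcongr
  refine step1.trans ?_
  have e3 : n - (q^2+r^2)/n - (q*r - q*(n-q-r))/n - (q*r - r*(n-q-r))/n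
      = (n*n - ((q^2+r^2) + (q*r - q*(n-q-r)) + (q*r - r*(n-q-r))))/n := by
    field_simp; ring
  rw [e3, div_le_iff₀ hn]
  nlinarith [sq_nonneg (n-q-r)]

lemma core_sum_one {m : ℕ} (ν : Fin m → ℝ) (n : ℝ) (hn : 0 < n)
    (hlt : ∀ k, ν k < n) (hsum : ∑ k, ν k = n) :
    ∑ p ∈ univ.filter (fun p : Fin m × Fin m => p.1 < p.2),
      (ν p.1 / (n - ν p.2) + ν p.2 / (n - ν p.1) - (ν p.1 + ν p.2)/n) = 1 := by
  have hne : ∀ k, n - ν k ≠ 0 := fun k => ne_of_gt (by linarith [hlt k])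
  have hn0 : n ≠ 0 := ne_of_gt hn
  set g : Fin m → Fin m → ℝ := fun k l => ν l / (n - ν k) - ν l / n with hg
  have h1 : ∀ p ∈ univ.filter (fun p : Fin m × Fin m => p.1 < p.2),
      (ν p.1 / (n - ν p.2) + ν p.2 / (n - ν p.1) - (ν p.1 + ν p.2)/n)
        = g p.1 p.2 + g p.2 p.1 := by
    intro p _
    simp only [hg]
    ring
  rw [Finset.sum_congr rfl h1, sum_pairs, sum_offdiag]
  have h2 : ∀ k : Fin m, (∑ l, g k l) - g k k = ν k / n := by
    intro k
    have : ∑ l, g k l = n / (n - ν k) - 1 := by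
      simp only [hg]
      rw [Finset.sum_sub_distrib, ← Finset.sum_div, ← Finset.sum_div, hsum,
        div_self hn0]
    rw [this]
    simp only [hg]
    have h := hne k
    field_simp
    ring
  rw [← Finset.sum_sub_distrib, Finset.sum_congr rfl (fun k _ => h2 k),
    ← Finset.sum_div, hsum, div_self hn0]

lemma core_sum_T {m : ℕ} (ν : Fin m → ℝ) (n : ℝ) (hn : 0 < n)
    (h0 : ∀ k, 0 ≤ ν k) (hlt : ∀ k, ν k < n) (hsum : ∑ k, ν k = n)
    (k₀ l₀ : Fin m) (hne : k₀ ≠ l₀) :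
    ∑ p ∈ univ.filter (fun p : Fin m × Fin m => p.1 < p.2),
      (ν p.1 / (n - ν p.2) + ν p.2 / (n - ν p.1) - (ν p.1 + ν p.2)/n)
        * (n - ν p.1 - ν p.2) ≤ 3 * (n - ν k₀ - ν l₀) := by
  have hd : ∀ k, (0:ℝ) < n - ν k := fun k => by linarith [hlt k]
  have hn0 : (n:ℝ) ≠ 0 := ne_of_gt hn
  set G : Fin m → Fin m → ℝ :=
    fun k l => ν k * ν l / n - ν k * ν l^2 / (n*(n - ν k)) with hG
  have h1 : ∀ p ∈ univ.filter (fun p : Fin m × Fin m => p.1 < p.2),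
      (ν p.1 / (n - ν p.2) + ν p.2 / (n - ν p.1) - (ν p.1 + ν p.2)/n)
        * (n - ν p.1 - ν p.2) = G p.1 p.2 + G p.2 p.1 := by
    intro p _
    simp only [hG]
    have h1 := (hd p.1).ne'
    have h2 := (hd p.2).ne'
    field_simp
    ring
  rw [Finset.sum_congr rfl h1, sum_pairs]
  have hRnn : ∀ k l : Fin m, 0 ≤ ν k * ν l^2 / (n*(n - ν k)) := by
    intro k l
    exact div_nonneg (mul_nonneg (h0 k) (sq_nonneg _))
      (mul_nonneg hn.le (hd k).le)
  have hsplit : ∑ p ∈ univ.filter (fun p : Fin m × Fin m => p.1 ≠ p.2), G p.1 p.2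
      = (∑ p ∈ univ.filter (fun p : Fin m × Fin m => p.1 ≠ p.2), ν p.1 * ν p.2 / n)
        - ∑ p ∈ univ.filter (fun p : Fin m × Fin m => p.1 ≠ p.2),
            ν p.1 * ν p.2^2 / (n*(n - ν p.1)) := by
    rw [← Finset.sum_sub_distrib]
  rw [hsplit]
  have inner1 : ∀ k : Fin m, ∑ l, ν k * ν l / n = ν k := by
    intro k
    rw [← Finset.sum_div, ← Finset.mul_sum, hsum, mul_div_assoc, div_self hn0,
      mul_one]
  have hu : ∑ p ∈ univ.filter (fun p : Fin m × Fin m => p.1 ≠ p.2), ν p.1 * ν p.2 / n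
      = n - (∑ k, (ν k)^2) / n := by
    rw [sum_offdiag (fun k l => ν k * ν l / n)]
    congr 1
    · rw [Finset.sum_congr rfl (fun k _ => inner1 k), hsum]
    · rw [← Finset.sum_div]
      congr 1
      exact Finset.sum_congr rfl (fun k _ => by ring)
  rw [hu]
  have hRsum : ν k₀ * ν l₀^2 / (n*(n - ν k₀)) + ν l₀ * ν k₀^2 / (n*(n - ν l₀))
      ≤ ∑ p ∈ univ.filter (fun p : Fin m × Fin m => p.1 ≠ p.2),
          ν p.1 * ν p.2^2 / (n*(n - ν p.1)) := by
    have hsub : ({(k₀, l₀), (l₀, k₀)} : Finset (Fin m × Fin m))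
        ⊆ univ.filter (fun p : Fin m × Fin m => p.1 ≠ p.2) := by
      intro p hp
      simp only [Finset.mem_insert, Finset.mem_singleton] at hp
      rcases hp with h | h <;> subst h <;>
        simp [Finset.mem_filter, hne, hne.symm]
    have hpair : ((k₀, l₀) : Fin m × Fin m) ≠ (l₀, k₀) := by
      simp only [ne_eq, Prod.mk.injEq, not_and]
      intro h; exact absurd h hne
    have := Finset.sum_le_sum_of_subset_of_nonneg hsub
      (fun p _ _ => hRnn p.1 p.2)
    rwa [Finset.sum_pair hpair] at this
  have hsq : (ν k₀)^2 + (ν l₀)^2 ≤ ∑ k, (ν k)^2 := by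
    have := Finset.sum_le_sum_of_subset_of_nonneg
      (Finset.subset_univ ({k₀, l₀} : Finset (Fin m)))
      (fun k _ _ => sq_nonneg (ν k))
    rwa [Finset.sum_pair hne] at this
  have hdivsq : ((ν k₀)^2 + (ν l₀)^2)/n ≤ (∑ k, (ν k)^2)/n := by gcongr
  have hkey := key_alg n (ν k₀) (ν l₀) hn (h0 k₀) (h0 l₀) (hlt k₀) (hlt l₀)
  linarith

section MetricAux
variable {α : Type*} [PseudoMetricSpace α] {m : ℕ}

lemma distSet_eq (y : Fin m → α) :
    {c : ℝ | ∃ k l : Fin m, k ≠ l ∧ c = dist (y k) (y l)}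
    = ↑(((univ : Finset (Fin m × Fin m)).filter fun p => p.1 ≠ p.2).image
        fun p => dist (y p.1) (y p.2)) := by
  ext c
  simp only [Set.mem_setOf_eq, Finset.coe_image, Set.mem_image, Finset.mem_coe,
    Finset.mem_filter, Finset.mem_univ, true_and]
  constructor
  · rintro ⟨k, l, hkl, rfl⟩; exact ⟨(k, l), hkl, rfl⟩
  · rintro ⟨p, hp, rfl⟩; exact ⟨p.1, p.2, hp, rfl⟩

lemma offdiag_nonempty (hm : 2 ≤ m) :
    ((univ : Finset (Fin m × Fin m)).filter fun p => p.1 ≠ p.2).Nonempty := by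
  refine ⟨(⟨0, by omega⟩, ⟨1, by omega⟩), ?_⟩
  simp only [Finset.mem_filter, Finset.mem_univ, true_and, ne_eq]
  simp [Fin.ext_iff]

lemma dminC_le (y : Fin m → α) (hm : 2 ≤ m) {k l : Fin m} (h : k ≠ l) :
    dminC y ≤ dist (y k) (y l) := by
  have hne := (offdiag_nonempty (m := m) hm).image fun p => dist (y p.1) (y p.2)
  rw [dminC, distSet_eq, hne.csInf_eq_min']
  exact Finset.min'_le _ _
    (Finset.mem_image_of_mem _ (Finset.mem_filter.2 ⟨Finset.mem_univ (k, l), h⟩))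

lemma le_dmaxC (y : Fin m → α) (hm : 2 ≤ m) {k l : Fin m} (h : k ≠ l) :
    dist (y k) (y l) ≤ dmaxC y := by
  have hne := (offdiag_nonempty (m := m) hm).image fun p => dist (y p.1) (y p.2)
  rw [dmaxC, distSet_eq, hne.csSup_eq_max']
  apply Finset.le_max'
  exact Finset.mem_image_of_mem _ (Finset.mem_filter.2 ⟨Finset.mem_univ (k, l), h⟩)

lemma dminC_pos {β : Type*} [MetricSpace β] (y : Fin m → β)
    (hy : Function.Injective y) (hm : 2 ≤ m) : 0 < dminC y := by
  have hne := (offdiag_nonempty (m := m) hm).image fun p => dist (y p.1) (y p.2)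
  rw [dminC, distSet_eq, hne.csInf_eq_min']
  obtain ⟨p, hp, hval⟩ := Finset.mem_image.1 (Finset.min'_mem _ hne)
  rw [← hval]
  exact dist_pos.2 fun h => (Finset.mem_filter.1 hp).2 (hy h)

lemma OPT_spec {n : ℕ} (y : Fin m → α) (x : Fin n → α) (hm : 2 ≤ m) :
    (∃ k l : Fin m, k ≠ l ∧ OPT y x = socialCost y k l x) ∧
      ∀ k l : Fin m, k ≠ l → OPT y x ≤ socialCost y k l x := by
  have heq : {c : ℝ | ∃ k l : Fin m, k ≠ l ∧ c = socialCost y k l x}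
      = ↑(((univ : Finset (Fin m × Fin m)).filter fun p => p.1 ≠ p.2).image
          fun p => socialCost y p.1 p.2 x) := by
    ext c
    simp only [Set.mem_setOf_eq, Finset.coe_image, Set.mem_image, Finset.mem_coe,
      Finset.mem_filter, Finset.mem_univ, true_and]
    constructor
    · rintro ⟨k, l, hkl, rfl⟩; exact ⟨(k, l), hkl, rfl⟩
    · rintro ⟨p, hp, rfl⟩; exact ⟨p.1, p.2, hp, rfl⟩
  have hne := (offdiag_nonempty (m := m) hm).image fun p => socialCost y p.1 p.2 x
  constructor
  · rw [OPT, heq, hne.csInf_eq_min']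
    obtain ⟨p, hp, hval⟩ := Finset.mem_image.1 (Finset.min'_mem _ hne)
    exact ⟨p.1, p.2, (Finset.mem_filter.1 hp).2, hval.symm⟩
  · intro k l hkl
    rw [OPT, heq, hne.csInf_eq_min']
    exact Finset.min'_le _ _
      (Finset.mem_image_of_mem _ (Finset.mem_filter.2 ⟨Finset.mem_univ (k, l), hkl⟩))

end MetricAux

lemma votes_sum {m n : ℕ} (a : Fin n → Fin m) : ∑ k, votes a k = n := by
  classical
  have h := Finset.card_eq_sum_card_fiberwise
    (fun (i : Fin n) (_ : i ∈ (univ : Finset (Fin n))) => Finset.mem_univ (a i))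
  simp only [Finset.card_univ, Fintype.card_fin] at h
  simpa [votes] using h.symm

lemma votes_le {m n : ℕ} (a : Fin n → Fin m) (k : Fin m) : votes a k ≤ n := by
  have := Finset.card_filter_le (univ : Finset (Fin n)) (fun i => a i = k)
  simpa [votes, Finset.card_univ] using this

lemma votes_pair_card {m n : ℕ} (a : Fin n → Fin m) {k l : Fin m} (h : k ≠ l) :
    votes a k + votes a l
      + ((univ : Finset (Fin n)).filter fun i => ¬(a i = k ∨ a i = l)).card = n := by
  classical
  have h1 : ((univ : Finset (Fin n)).filter fun i => a i = k ∨ a i = l).card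
      = votes a k + votes a l := by
    rw [Finset.filter_or, Finset.card_union_of_disjoint]
    · rfl
    · rw [Finset.disjoint_left]
      intro i hi1 hi2
      simp only [Finset.mem_filter] at hi1 hi2
      exact h (hi1.2 ▸ hi2.2)
  have h2 := Finset.card_filter_add_card_filter_not
    (s := (univ : Finset (Fin n))) (p := fun i : Fin n => a i = k ∨ a i = l)
  rw [h1] at h2
  simpa [Finset.card_univ] using h2

lemma pairs_with_card {m : ℕ} (k0 : Fin m) :
    ((univ : Finset (Fin m × Fin m)).filter
        fun p => p.1 < p.2 ∧ (p.1 = k0 ∨ p.2 = k0)).card = m - 1 := by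
  classical
  have hset : ((univ : Finset (Fin m × Fin m)).filter
        fun p => p.1 < p.2 ∧ (p.1 = k0 ∨ p.2 = k0))
      = ({k0} ×ˢ Finset.Ioi k0) ∪ (Finset.Iio k0 ×ˢ {k0}) := by
    ext p
    simp only [Finset.mem_filter, Finset.mem_univ, true_and, Finset.mem_union,
      Finset.mem_product, Finset.mem_singleton, Finset.mem_Ioi, Finset.mem_Iio]
    constructor
    · rintro ⟨hlt, (h | h)⟩
      · exact Or.inl ⟨h, by rw [← h]; exact hlt⟩
      · exact Or.inr ⟨by rw [← h]; exact hlt, h⟩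
    · rintro (⟨h1, h2⟩ | ⟨h1, h2⟩)
      · exact ⟨by rw [h1]; exact h2, Or.inl h1⟩
      · exact ⟨by rw [h2]; exact h1, Or.inr h2⟩
  have hdisj : Disjoint ({k0} ×ˢ Finset.Ioi k0) (Finset.Iio k0 ×ˢ ({k0} : Finset (Fin m))) := by
    rw [Finset.disjoint_left]
    intro p hp1 hp2
    simp only [Finset.mem_product, Finset.mem_singleton, Finset.mem_Ioi,
      Finset.mem_Iio] at hp1 hp2
    rw [hp1.1] at hp2
    exact absurd hp2.1 (lt_irrefl k0)
  rw [hset, Finset.card_union_of_disjoint hdisj, Finset.card_product,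
    Finset.card_product, Finset.card_singleton, Fin.card_Ioi, Fin.card_Iio]
  have := k0.isLt
  omega

end AuxLemmas

/-- For any `m ≥ 3` candidates at distinct locations in a Euclidean space, the
Pair-Independent mechanism has distortion at most `1 + 6σ`, where
`σ = d_max / d_min` for the candidate set. -/
theorem stmt11 {dim m n : ℕ} (hm : 3 ≤ m)
    (y : Fin m → EuclideanSpace ℝ (Fin dim)) (hy : Function.Injective y)
    (a : Fin n → Fin m) (x : Fin n → EuclideanSpace ℝ (Fin dim))
    (hcons : Consistent y a x) :
    expSC y (pairIndep n m) a x ≤ (1 + 6 * (dmaxC y / dminC y)) * OPT y x := by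
  classical
  have hm2 : 2 ≤ m := by omega
  obtain ⟨⟨k₀, l₀, hk₀l₀, hOPT⟩, hOPTle⟩ := OPT_spec y x hm2
  have hdmin : 0 < dminC y := dminC_pos y hy hm2
  have hdmax0 : 0 ≤ dmaxC y := le_trans dist_nonneg (le_dmaxC y hm2 hk₀l₀)
  have hσ : 0 ≤ dmaxC y / dminC y := div_nonneg hdmax0 hdmin.le
  set S := ∑ i, dist (x i) (y (a i)) with hSdef
  have hS0 : 0 ≤ S := Finset.sum_nonneg fun i _ => dist_nonneg
  have low1 : ∀ (k l : Fin m) (i : Fin n),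
      dist (x i) (y (a i)) ≤ pairCost y k l (x i) :=
    fun k l i => le_min (hcons i k) (hcons i l)
  have pc0 : ∀ (k l : Fin m) (i : Fin n), 0 ≤ pairCost y k l (x i) :=
    fun k l i => le_min dist_nonneg dist_nonneg
  have hSC_ge_S : ∀ k l : Fin m, S ≤ socialCost y k l x :=
    fun k l => Finset.sum_le_sum fun i _ => low1 k l i
  have hOPT_S : S ≤ OPT y x := by rw [hOPT]; exact hSC_ge_S k₀ l₀
  have hOPT0 : 0 ≤ OPT y x := le_trans hS0 hOPT_S
  by_cases h0 : n = 0
  · have hLHS : expSC y (pairIndep n m) a x = 0 := by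
      apply Finset.sum_eq_zero
      intro p _
      have hz : socialCost y p.1 p.2 x = 0 := by
        subst h0; simp [socialCost]
      rw [hz, mul_zero]
    rw [hLHS]
    exact mul_nonneg (by linarith) hOPT0
  have hn0 : 0 < n := Nat.pos_of_ne_zero h0
  have hnR : (0:ℝ) < (n:ℝ) := by exact_mod_cast hn0
  -- generic upper bound on socialCost
  have up : ∀ k l : Fin m, k ≠ l → socialCost y k l x ≤ S + dmaxC y *
      (((univ : Finset (Fin n)).filter fun i => ¬(a i = k ∨ a i = l)).card : ℝ) := by
    intro k l hkl
    have hsplit := Finset.sum_filter_add_sum_filter_not (univ : Finset (Fin n))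
      (fun i => a i = k ∨ a i = l) (fun i => pairCost y k l (x i))
    have hsplit2 := Finset.sum_filter_add_sum_filter_not (univ : Finset (Fin n))
      (fun i => a i = k ∨ a i = l) (fun i => dist (x i) (y (a i)))
    have hgood : ∑ i ∈ univ.filter (fun i => a i = k ∨ a i = l),
          pairCost y k l (x i)
        ≤ ∑ i ∈ univ.filter (fun i => a i = k ∨ a i = l),
            dist (x i) (y (a i)) := by
      apply Finset.sum_le_sum
      intro i hi
      simp only [pairCost]
      rcases (Finset.mem_filter.1 hi).2 with h | h
      · rw [← h]; exact min_le_left _ _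
      · rw [← h]; exact min_le_right _ _
    have hbad : ∑ i ∈ univ.filter (fun i => ¬(a i = k ∨ a i = l)),
          pairCost y k l (x i)
        ≤ (∑ i ∈ univ.filter (fun i => ¬(a i = k ∨ a i = l)),
            dist (x i) (y (a i)))
          + dmaxC y *
            (((univ : Finset (Fin n)).filter fun i => ¬(a i = k ∨ a i = l)).card : ℝ) := by
      have hb : ∀ i ∈ univ.filter (fun i : Fin n => ¬(a i = k ∨ a i = l)),
          pairCost y k l (x i) ≤ dist (x i) (y (a i)) + dmaxC y := by
        intro i hi
        have hik : a i ≠ k := fun h => (Finset.mem_filter.1 hi).2 (Or.inl h)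
        calc pairCost y k l (x i) ≤ dist (x i) (y k) := min_le_left _ _
          _ ≤ dist (x i) (y (a i)) + dist (y (a i)) (y k) := dist_triangle _ _ _
          _ ≤ dist (x i) (y (a i)) + dmaxC y := by
              have := le_dmaxC y hm2 hik
              linarith
      calc ∑ i ∈ univ.filter (fun i => ¬(a i = k ∨ a i = l)), pairCost y k l (x i)
          ≤ ∑ i ∈ univ.filter (fun i => ¬(a i = k ∨ a i = l)),
              (dist (x i) (y (a i)) + dmaxC y) := Finset.sum_le_sum hb
        _ = (∑ i ∈ univ.filter (fun i => ¬(a i = k ∨ a i = l)),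
              dist (x i) (y (a i)))
            + dmaxC y *
              (((univ : Finset (Fin n)).filter fun i => ¬(a i = k ∨ a i = l)).card : ℝ) := by
            rw [Finset.sum_add_distrib, Finset.sum_const, nsmul_eq_mul]
            ring
    have hSC : socialCost y k l x
        = (∑ i ∈ univ.filter (fun i => a i = k ∨ a i = l), pairCost y k l (x i))
          + ∑ i ∈ univ.filter (fun i => ¬(a i = k ∨ a i = l)), pairCost y k l (x i) := by
      rw [socialCost, ← hsplit]
    rw [hSC, hSdef, ← hsplit2]
    linarith
  -- generic lower bound via the bad set
  have lowB : ∀ k l : Fin m, k ≠ l →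
      dminC y / 2 *
        (((univ : Finset (Fin n)).filter fun i => ¬(a i = k ∨ a i = l)).card : ℝ)
      ≤ socialCost y k l x := by
    intro k l hkl
    have hb : ∀ i ∈ univ.filter (fun i : Fin n => ¬(a i = k ∨ a i = l)),
        dminC y / 2 ≤ pairCost y k l (x i) := by
      intro i hi
      have hik : a i ≠ k := fun h => (Finset.mem_filter.1 hi).2 (Or.inl h)
      have hil : a i ≠ l := fun h => (Finset.mem_filter.1 hi).2 (Or.inr h)
      have h1 : dminC y ≤ dist (y (a i)) (y k) := dminC_le y hm2 hik
      have h2 : dminC y ≤ dist (y (a i)) (y l) := dminC_le y hm2 hil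
      have t1 : dist (y (a i)) (y k) ≤ dist (x i) (y (a i)) + dist (x i) (y k) := by
        rw [dist_comm (x i) (y (a i))]
        exact dist_triangle _ _ _
      have t2 : dist (y (a i)) (y l) ≤ dist (x i) (y (a i)) + dist (x i) (y l) := by
        rw [dist_comm (x i) (y (a i))]
        exact dist_triangle _ _ _
      have c1 := hcons i k
      have c2 := hcons i l
      exact le_min (by linarith) (by linarith)
    calc dminC y / 2 *
          (((univ : Finset (Fin n)).filter fun i => ¬(a i = k ∨ a i = l)).card : ℝ)
        = ∑ _i ∈ univ.filter (fun i : Fin n => ¬(a i = k ∨ a i = l)), dminC y / 2 := by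
          rw [Finset.sum_const, nsmul_eq_mul]; ring
      _ ≤ ∑ i ∈ univ.filter (fun i : Fin n => ¬(a i = k ∨ a i = l)),
            pairCost y k l (x i) := Finset.sum_le_sum hb
      _ ≤ ∑ i, pairCost y k l (x i) :=
          Finset.sum_le_sum_of_subset_of_nonneg (Finset.filter_subset _ _)
            (fun i _ _ => pc0 k l i)
      _ = socialCost y k l x := rfl
  by_cases hU : ∃ k, votes a k = n
  · -- unanimity case
    obtain ⟨k0, hk0⟩ := hU
    have hall : ∀ i, a i = k0 := by
      have hcard : ((univ : Finset (Fin n)).filter fun i => a i = k0).card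
          = Fintype.card (Fin n) := by
        simp only [Fintype.card_fin]; exact hk0
      have huniv := Finset.eq_univ_of_card _ hcard
      intro i
      have := Finset.mem_filter.1 (huniv ▸ Finset.mem_univ i)
      exact this.2
    have hvotes0 : ∀ k, k ≠ k0 → votes a k = 0 := by
      intro k hk
      rw [votes, Finset.card_eq_zero, Finset.filter_eq_empty_iff]
      intro i _
      rw [hall i]
      exact fun h => hk h.symm
    have hm1 : (0:ℝ) < (m:ℝ) - 1 := by
      have : (3:ℝ) ≤ (m:ℝ) := by exact_mod_cast hm
      linarith
    have hvals : ∀ p ∈ univ.filter (fun p : Fin m × Fin m => p.1 < p.2),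
        pairIndep n m a p.1 p.2
          = if p.1 = k0 ∨ p.2 = k0 then 1/((m:ℝ)-1) else 0 := by
      intro p hp
      have hpne : p.1 ≠ p.2 := ne_of_lt (Finset.mem_filter.1 hp).2
      by_cases hc : p.1 = k0 ∨ p.2 = k0
      · rw [if_pos hc, pairIndep, if_neg hpne, if_pos]
        rcases hc with h | h
        · exact Or.inl (h ▸ hk0)
        · exact Or.inr (h ▸ hk0)
      · push_neg at hc
        rw [if_neg (by push_neg; exact hc), pairIndep, if_neg hpne, if_neg]
        · rw [hvotes0 _ hc.1, hvotes0 _ hc.2]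
          norm_num
        · rw [hvotes0 _ hc.1, hvotes0 _ hc.2]
          push_neg
          exact ⟨fun h => h0 h.symm, fun h => h0 h.symm⟩
    have hsum_f : ∑ p ∈ univ.filter (fun p : Fin m × Fin m => p.1 < p.2),
        pairIndep n m a p.1 p.2 = 1 := by
      rw [Finset.sum_congr rfl hvals, Finset.sum_ite, Finset.sum_const,
        Finset.sum_const_zero, add_zero, Finset.filter_filter, nsmul_eq_mul]
      rw [pairs_with_card k0, Nat.cast_sub (by omega), Nat.cast_one]
      field_simp
    have hterm : ∀ p ∈ univ.filter (fun p : Fin m × Fin m => p.1 < p.2),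
        pairIndep n m a p.1 p.2 * socialCost y p.1 p.2 x
          ≤ pairIndep n m a p.1 p.2 * S := by
      intro p hp
      rw [hvals p hp]
      by_cases hc : p.1 = k0 ∨ p.2 = k0
      · rw [if_pos hc]
        apply mul_le_mul_of_nonneg_left ?_ (by positivity)
        apply Finset.sum_le_sum
        intro i _
        simp only [pairCost]
        rcases hc with h | h
        · rw [hall i, ← h]; exact min_le_left _ _
        · rw [hall i, ← h]; exact min_le_right _ _
      · rw [if_neg hc, zero_mul, zero_mul]
    calc expSC y (pairIndep n m) a x
        ≤ ∑ p ∈ univ.filter (fun p : Fin m × Fin m => p.1 < p.2),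
            pairIndep n m a p.1 p.2 * S := Finset.sum_le_sum hterm
      _ = S := by rw [← Finset.sum_mul, hsum_f, one_mul]
      _ ≤ OPT y x := hOPT_S
      _ ≤ (1 + 6 * (dmaxC y / dminC y)) * OPT y x := by nlinarith
  · -- main case
    push_neg at hU
    set ν : Fin m → ℝ := fun k => (votes a k : ℝ) with hν
    have hνlt : ∀ k, ν k < (n:ℝ) := fun k => by
      simp only [hν]
      have := lt_of_le_of_ne (votes_le a k) (hU k)
      exact_mod_cast this
    have hν0 : ∀ k, 0 ≤ ν k := fun k => Nat.cast_nonneg _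
    have hνsum : ∑ k, ν k = (n:ℝ) := by
      rw [hν, ← Nat.cast_sum]
      exact_mod_cast congrArg (Nat.cast : ℕ → ℝ) (votes_sum a)
    have hfeq : ∀ p ∈ univ.filter (fun p : Fin m × Fin m => p.1 < p.2),
        pairIndep n m a p.1 p.2
          = ν p.1/((n:ℝ) - ν p.2) + ν p.2/((n:ℝ) - ν p.1)
            - (ν p.1 + ν p.2)/(n:ℝ) := by
      intro p hp
      have hpne : p.1 ≠ p.2 := ne_of_lt (Finset.mem_filter.1 hp).2
      rw [pairIndep, if_neg hpne, if_neg (by push_neg; exact ⟨hU p.1, hU p.2⟩)]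
    have hf0 : ∀ p ∈ univ.filter (fun p : Fin m × Fin m => p.1 < p.2),
        0 ≤ pairIndep n m a p.1 p.2 := by
      intro p hp
      rw [hfeq p hp]
      have d1 : (0:ℝ) < (n:ℝ) - ν p.1 := by linarith [hνlt p.1]
      have d2 : (0:ℝ) < (n:ℝ) - ν p.2 := by linarith [hνlt p.2]
      have e : ν p.1/((n:ℝ) - ν p.2) + ν p.2/((n:ℝ) - ν p.1)
            - (ν p.1 + ν p.2)/(n:ℝ)
          = ν p.1*ν p.2/((n:ℝ)*((n:ℝ)-ν p.1))
            + ν p.1*ν p.2/((n:ℝ)*((n:ℝ)-ν p.2)) := by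
        field_simp
        ring
      rw [e]
      have := hν0 p.1
      have := hν0 p.2
      positivity
    have hbadcard : ∀ k l : Fin m, k ≠ l →
        (((univ : Finset (Fin n)).filter fun i => ¬(a i = k ∨ a i = l)).card : ℝ)
          = (n:ℝ) - ν k - ν l := by
      intro k l hkl
      have h := congrArg (Nat.cast : ℕ → ℝ) (votes_pair_card a hkl)
      push_cast at h
      simp only [hν]
      linarith
    have hstep1 : expSC y (pairIndep n m) a x
        ≤ ∑ p ∈ univ.filter (fun p : Fin m × Fin m => p.1 < p.2),
            pairIndep n m a p.1 p.2
              * (S + dmaxC y * ((n:ℝ) - ν p.1 - ν p.2)) := by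
      apply Finset.sum_le_sum
      intro p hp
      have hpne : p.1 ≠ p.2 := ne_of_lt (Finset.mem_filter.1 hp).2
      apply mul_le_mul_of_nonneg_left ?_ (hf0 p hp)
      rw [← hbadcard p.1 p.2 hpne]
      exact up p.1 p.2 hpne
    have hstep2 : ∑ p ∈ univ.filter (fun p : Fin m × Fin m => p.1 < p.2),
          pairIndep n m a p.1 p.2 * (S + dmaxC y * ((n:ℝ) - ν p.1 - ν p.2))
        = S * (∑ p ∈ univ.filter (fun p : Fin m × Fin m => p.1 < p.2),
            pairIndep n m a p.1 p.2)
          + dmaxC y * ∑ p ∈ univ.filter (fun p : Fin m × Fin m => p.1 < p.2),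
              pairIndep n m a p.1 p.2 * ((n:ℝ) - ν p.1 - ν p.2) := by
      rw [Finset.mul_sum, Finset.mul_sum, ← Finset.sum_add_distrib]
      apply Finset.sum_congr rfl
      intro p _
      ring
    have hsum1 : ∑ p ∈ univ.filter (fun p : Fin m × Fin m => p.1 < p.2),
        pairIndep n m a p.1 p.2 = 1 := by
      rw [Finset.sum_congr rfl hfeq]
      exact core_sum_one ν (n:ℝ) hnR hνlt hνsum
    have hsumT : ∑ p ∈ univ.filter (fun p : Fin m × Fin m => p.1 < p.2),
        pairIndep n m a p.1 p.2 * ((n:ℝ) - ν p.1 - ν p.2)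
          ≤ 3 * ((n:ℝ) - ν k₀ - ν l₀) := by
      have hcg : ∀ p ∈ univ.filter (fun p : Fin m × Fin m => p.1 < p.2),
          pairIndep n m a p.1 p.2 * ((n:ℝ) - ν p.1 - ν p.2)
            = (ν p.1/((n:ℝ) - ν p.2) + ν p.2/((n:ℝ) - ν p.1)
                - (ν p.1 + ν p.2)/(n:ℝ)) * ((n:ℝ) - ν p.1 - ν p.2) := by
        intro p hp
        rw [hfeq p hp]
      rw [Finset.sum_congr rfl hcg]
      exact core_sum_T ν (n:ℝ) hnR hν0 hνlt hνsum k₀ l₀ hk₀l₀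
    have hT₀ : dminC y / 2 * ((n:ℝ) - ν k₀ - ν l₀) ≤ OPT y x := by
      rw [← hbadcard k₀ l₀ hk₀l₀, hOPT]
      exact lowB k₀ l₀ hk₀l₀
    have hT₀nn : (0:ℝ) ≤ (n:ℝ) - ν k₀ - ν l₀ := by
      rw [← hbadcard k₀ l₀ hk₀l₀]
      positivity
    have h6 : dmaxC y * (3 * ((n:ℝ) - ν k₀ - ν l₀))
        ≤ 6 * (dmaxC y / dminC y) * OPT y x := by
      have e : 6 * (dmaxC y / dminC y) * (dminC y / 2 * ((n:ℝ) - ν k₀ - ν l₀))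
          = dmaxC y * (3 * ((n:ℝ) - ν k₀ - ν l₀)) := by
        field_simp
        ring
      rw [← e]
      apply mul_le_mul_of_nonneg_left hT₀
      positivity
    have hlast : dmaxC y * (∑ p ∈ univ.filter (fun p : Fin m × Fin m => p.1 < p.2),
          pairIndep n m a p.1 p.2 * ((n:ℝ) - ν p.1 - ν p.2))
        ≤ dmaxC y * (3 * ((n:ℝ) - ν k₀ - ν l₀)) :=
      mul_le_mul_of_nonneg_left hsumT hdmax0
    calc expSC y (pairIndep n m) a x
        ≤ _ := hstep1
      _ = _ := hstep2
      _ ≤ (1 + 6 * (dmaxC y / dminC y)) * OPT y x := by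
          rw [hsum1, mul_one]
          have := hOPT_S
          nlinarith [hlast, h6]
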